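/- arXiv:1909.02849 — 3 statements merged into one kernel-verified Lean document; each statement's English description precedes it below -/
import Mathlib

section
/- If S is a finite simple closed lattice cycle in ℤ² consisting of L cells (L even, L ≥ 8), then the number of cells strictly enclosed by S is at most (L/4 - 1)², i.e., at most ((L-4)/4)² when L ≡ 0 mod 4; in particular a cycle of 4(6m+1) cells encloses at most (6m)² cells. -/
/-- Two cells of `ℤ²` are orthogonally adjacent. -/
def CellAdj (p q : ℤ × ℤ) : Prop :=
  (p.1 - q.1).natAbs + (p.2 - q.2).natAbs = 1

/-- The set of cells strictly enclosed by a cycle `c` : cells not on the cycle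
from which every infinite (unbounded) orthogonal path must cross the cycle. -/
def Enclosed {L : ℕ} (c : Fin L → ℤ × ℤ) : Set (ℤ × ℤ) :=
  {p | p ∉ Set.range c ∧
    ∀ f : ℕ → ℤ × ℤ, f 0 = p → (∀ n, CellAdj (f n) (f (n + 1))) →
      (∀ N : ℕ, ∃ n, N ≤ (f n).1.natAbs + (f n).2.natAbs) →
      ∃ n, f n ∈ Set.range c}

open Fin.NatCast Fin.CommRing in
lemma cross_up {L : ℕ} [NeZero L] (g : Fin L → ℤ)
    (hstep : ∀ i, (g (i + 1) - g i).natAbs ≤ 1)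
    (t : ℤ) (i j : Fin L) (hi : g i ≤ t) (hj : t + 1 ≤ g j) :
    ∃ k, g k = t ∧ g (k + 1) = t + 1 := by
  have hex : ∃ m : ℕ, t + 1 ≤ g (i + (m : Fin L)) := by
    refine ⟨(j - i).val, ?_⟩
    rw [Fin.cast_val_eq_self]
    have hij : i + (j - i) = j := by ring
    rw [hij]; exact hj
  have hm := Nat.find_spec hex
  set m := Nat.find hex with hmdef
  have hm0 : m ≠ 0 := by
    intro h
    rw [h] at hm
    simp at hm
    omega
  have hprev := Nat.find_min hex (m := m - 1) (by omega)
  have hsucc : i + ((m - 1 : ℕ) : Fin L) + 1 = i + (m : Fin L) := by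
    have h1 : ((m - 1 : ℕ) : Fin L) + 1 = (m : Fin L) := by
      have h2 : ((m - 1) + 1 : ℕ) = m := by omega
      rw [← h2]; push_cast; ring
    rw [add_assoc, h1]
  have hs := hstep (i + ((m - 1 : ℕ) : Fin L))
  rw [hsucc] at hs
  exact ⟨i + ((m - 1 : ℕ) : Fin L), by omega, by rw [hsucc]; omega⟩

open Finset in
lemma changes_card {L : ℕ} [NeZero L] (g : Fin L → ℤ)
    (hstep : ∀ i, (g (i + 1) - g i).natAbs ≤ 1)
    (a b : ℤ) (i0 j0 : Fin L) (hia : g i0 = a) (hjb : g j0 = b) :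
    2 * (b - a).toNat ≤ (Finset.univ.filter fun k => g (k + 1) ≠ g k).card := by
  classical
  set S := Finset.univ.filter fun k : Fin L => g (k + 1) ≠ g k with hS
  set A : ℤ → Finset (Fin L) := fun t => Finset.univ.filter fun k : Fin L =>
    (g k = t ∧ g (k + 1) = t + 1) ∨ (g k = t + 1 ∧ g (k + 1) = t) with hA
  have key : ∀ t ∈ Finset.Ico a b, 2 ≤ (A t).card := by
    intro t ht
    simp only [Finset.mem_Ico] at ht
    obtain ⟨k1, hk1⟩ := cross_up g hstep t i0 j0 (by omega) (by omega)
    obtain ⟨k2, hk2⟩ := cross_up (fun k => -g k) (fun i => by have := hstep i; simp; omega)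
      (-(t+1)) j0 i0 (by simp; omega) (by simp; omega)
    simp only [neg_eq_iff_eq_neg] at hk2
    have hne : k1 ≠ k2 := by intro h; rw [h] at hk1; omega
    have hsub : ({k1, k2} : Finset (Fin L)) ⊆ A t := by
      intro k hk
      simp only [Finset.mem_insert, Finset.mem_singleton] at hk
      simp only [hA, Finset.mem_filter, Finset.mem_univ, true_and]
      rcases hk with rfl | rfl
      · exact Or.inl ⟨hk1.1, hk1.2⟩
      · exact Or.inr ⟨by omega, by omega⟩
    calc 2 = ({k1, k2} : Finset (Fin L)).card := (Finset.card_pair hne).symm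
      _ ≤ _ := Finset.card_le_card hsub
  have hdisj : ∀ t ∈ Finset.Ico a b, ∀ t' ∈ Finset.Ico a b, t ≠ t' → Disjoint (A t) (A t') := by
    intro t _ t' _ hne
    rw [Finset.disjoint_left]
    intro k hk hk'
    simp only [hA, Finset.mem_filter, Finset.mem_univ, true_and] at hk hk'
    omega
  have hbi : (Finset.Ico a b).biUnion A ⊆ S := by
    intro k hk
    simp only [Finset.mem_biUnion] at hk
    obtain ⟨t, _, hk⟩ := hk
    simp only [hA, Finset.mem_filter, Finset.mem_univ, true_and] at hk
    simp only [hS, Finset.mem_filter, Finset.mem_univ, true_and]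
    omega
  calc 2 * (b - a).toNat = ∑ _t ∈ Finset.Ico a b, 2 := by
        rw [Finset.sum_const, Int.card_Ico]; ring
    _ ≤ ∑ t ∈ Finset.Ico a b, (A t).card := Finset.sum_le_sum key
    _ = ((Finset.Ico a b).biUnion A).card := (Finset.card_biUnion hdisj).symm
    _ ≤ S.card := Finset.card_le_card hbi

lemma ray_hits {L : ℕ} (c : Fin L → ℤ × ℤ) {p : ℤ × ℤ} (hp : p ∈ Enclosed c)
    (v : ℤ × ℤ) (hv : v.1.natAbs + v.2.natAbs = 1) :
    ∃ n : ℕ, 1 ≤ n ∧ (p.1 + n * v.1, p.2 + n * v.2) ∈ Set.range c := by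
  obtain ⟨hpc, hesc⟩ := hp
  set f : ℕ → ℤ × ℤ := fun n => (p.1 + n * v.1, p.2 + n * v.2) with hf
  have h0 : f 0 = p := by simp [hf]
  have hadjf : ∀ n, CellAdj (f n) (f (n + 1)) := by
    intro n
    have h1 : (f n).1 - (f (n + 1)).1 = -v.1 := by simp only [hf]; push_cast; ring
    have h2 : (f n).2 - (f (n + 1)).2 = -v.2 := by simp only [hf]; push_cast; ring
    unfold CellAdj
    rw [h1, h2]
    omega
  have hub : ∀ N : ℕ, ∃ n, N ≤ (f n).1.natAbs + (f n).2.natAbs := by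
    intro N
    refine ⟨N + p.1.natAbs + p.2.natAbs, ?_⟩
    have hv4 : (v.1 = 1 ∧ v.2 = 0) ∨ (v.1 = -1 ∧ v.2 = 0) ∨
        (v.1 = 0 ∧ v.2 = 1) ∨ (v.1 = 0 ∧ v.2 = -1) := by omega
    simp only [hf]
    rcases hv4 with ⟨h1, h2⟩ | ⟨h1, h2⟩ | ⟨h1, h2⟩ | ⟨h1, h2⟩ <;>
      rw [h1, h2] <;>
      simp only [mul_one, mul_zero, mul_neg_one, add_zero] <;> omega
  obtain ⟨n, hn⟩ := hesc f h0 hadjf hub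
  refine ⟨n, ?_, hn⟩
  rcases Nat.eq_zero_or_pos n with rfl | h
  · rw [h0] at hn; exact absurd hn hpc
  · exact h

set_option maxHeartbeats 1600000 in
/-- Discrete isoperimetric inequality: a simple closed lattice cycle of `L` cells
(`L` even, `L ≥ 8`) strictly encloses at most `(L/4 − 1)²` cells; in particular
a cycle of `4(6m+1)` cells encloses at most `(6m)²` cells. -/
theorem stmt_2 (L : ℕ) (hL : 8 ≤ L) (hE : Even L)
    (c : Fin L → ℤ × ℤ) (hinj : Function.Injective c)
    (hadj : ∀ i : Fin L, CellAdj (c i) (c (i + ⟨1, by omega⟩))) :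
    ((Enclosed c).ncard : ℝ) ≤ ((L : ℝ) / 4 - 1) ^ 2 ∧
    (L % 4 = 0 → (Enclosed c).ncard ≤ ((L - 4) / 4) ^ 2) ∧
    (∀ m : ℕ, L = 4 * (6 * m + 1) → (Enclosed c).ncard ≤ (6 * m) ^ 2) := by
  classical
  haveI : NeZero L := ⟨by omega⟩
  have hadj1 : ∀ i : Fin L, CellAdj (c i) (c (i + 1)) := by
    intro i
    have h1 : (⟨1, by omega⟩ : Fin L) = 1 := by
      have hv : ((1 : Fin L) : ℕ) = 1 % L := Fin.val_one' L
      apply Fin.ext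
      rw [hv]
      exact (Nat.mod_eq_of_lt (by omega)).symm
    rw [← h1]; exact hadj i
  have hstepx : ∀ i : Fin L, ((c (i + 1)).1 - (c i).1).natAbs ≤ 1 := by
    intro i; have := hadj1 i; unfold CellAdj at this; omega
  have hstepy : ∀ i : Fin L, ((c (i + 1)).2 - (c i).2).natAbs ≤ 1 := by
    intro i; have := hadj1 i; unfold CellAdj at this; omega
  -- bounding box
  have hneX : (Finset.univ.image fun i => (c i).1).Nonempty :=
    ⟨(c ⟨0, by omega⟩).1, Finset.mem_image_of_mem _ (Finset.mem_univ _)⟩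
  have hneY : (Finset.univ.image fun i => (c i).2).Nonempty :=
    ⟨(c ⟨0, by omega⟩).2, Finset.mem_image_of_mem _ (Finset.mem_univ _)⟩
  set ax := (Finset.univ.image fun i => (c i).1).min' hneX with hax
  set bx := (Finset.univ.image fun i => (c i).1).max' hneX with hbx
  set ay := (Finset.univ.image fun i => (c i).2).min' hneY with hay
  set by' := (Finset.univ.image fun i => (c i).2).max' hneY with hby
  have haxle : ∀ k : Fin L, ax ≤ (c k).1 := fun k =>
    Finset.min'_le _ _ (Finset.mem_image_of_mem _ (Finset.mem_univ k))
  have hbxge : ∀ k : Fin L, (c k).1 ≤ bx := by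
    intro k
    rw [hbx]
    exact Finset.le_max' _ _ (Finset.mem_image_of_mem (fun i => (c i).1) (Finset.mem_univ k))
  have hayle : ∀ k : Fin L, ay ≤ (c k).2 := fun k =>
    Finset.min'_le _ _ (Finset.mem_image_of_mem _ (Finset.mem_univ k))
  have hbyge : ∀ k : Fin L, (c k).2 ≤ by' := by
    intro k
    rw [hby]
    exact Finset.le_max' _ _ (Finset.mem_image_of_mem (fun i => (c i).2) (Finset.mem_univ k))
  obtain ⟨ia, _, hia⟩ := Finset.mem_image.mp ((Finset.univ.image fun i => (c i).1).min'_mem hneX)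
  obtain ⟨ja, _, hja⟩ := Finset.mem_image.mp ((Finset.univ.image fun i => (c i).1).max'_mem hneX)
  obtain ⟨ib, _, hib⟩ := Finset.mem_image.mp ((Finset.univ.image fun i => (c i).2).min'_mem hneY)
  obtain ⟨jb, _, hjb⟩ := Finset.mem_image.mp ((Finset.univ.image fun i => (c i).2).max'_mem hneY)
  -- perimeter bound
  have hcx : 2 * (bx - ax).toNat ≤
      (Finset.univ.filter fun k : Fin L => (c (k + 1)).1 ≠ (c k).1).card :=
    changes_card (fun i => (c i).1) hstepx ax bx ia ja hia hja
  have hcy : 2 * (by' - ay).toNat ≤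
      (Finset.univ.filter fun k : Fin L => (c (k + 1)).2 ≠ (c k).2).card :=
    changes_card (fun i => (c i).2) hstepy ay by' ib jb hib hjb
  have hpart : (Finset.univ.filter fun k : Fin L => (c (k + 1)).1 ≠ (c k).1).card
      + (Finset.univ.filter fun k : Fin L => (c (k + 1)).2 ≠ (c k).2).card = L := by
    have heq : (Finset.univ.filter fun k : Fin L => (c (k + 1)).2 ≠ (c k).2)
        = (Finset.univ.filter fun k : Fin L => ¬ ((c (k + 1)).1 ≠ (c k).1)) := by
      apply Finset.ext
      intro k
      simp only [Finset.mem_filter, Finset.mem_univ, true_and]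
      have := hadj1 k
      unfold CellAdj at this
      omega
    rw [heq, Finset.card_filter_add_card_filter_not, Finset.card_univ, Fintype.card_fin]
  have hwh : 2 * (bx - ax).toNat + 2 * (by' - ay).toNat ≤ L := by omega
  have haxbx : ax ≤ bx := by have := haxle ja; omega
  have hayby : ay ≤ by' := by have := hayle jb; omega
  -- enclosed ⊆ open box
  have hbox : Enclosed c ⊆ ↑((Finset.Ioo ax bx) ×ˢ (Finset.Ioo ay by')) := by
    intro p hp
    obtain ⟨n1, hn1, hm1⟩ := ray_hits c hp (-1, 0) (by simp)
    obtain ⟨n2, hn2, hm2⟩ := ray_hits c hp (1, 0) (by simp)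
    obtain ⟨n3, hn3, hm3⟩ := ray_hits c hp (0, -1) (by simp)
    obtain ⟨n4, hn4, hm4⟩ := ray_hits c hp (0, 1) (by simp)
    obtain ⟨i1, hi1⟩ := hm1
    obtain ⟨i2, hi2⟩ := hm2
    obtain ⟨i3, hi3⟩ := hm3
    obtain ⟨i4, hi4⟩ := hm4
    have e1 := congrArg Prod.fst hi1
    have e2 := congrArg Prod.fst hi2
    have e3 := congrArg Prod.snd hi3
    have e4 := congrArg Prod.snd hi4
    simp only [mul_one, mul_zero, mul_neg_one, add_zero] at e1 e2 e3 e4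
    have b1 := haxle i1
    have b2 := hbxge i2
    have b3 := hayle i3
    have b4 := hbyge i4
    simp only [Finset.coe_product, Set.mem_prod, Finset.mem_coe, Finset.mem_Ioo]
    omega
  have hcard : (Enclosed c).ncard ≤ (bx - ax - 1).toNat * (by' - ay - 1).toNat := by
    calc (Enclosed c).ncard ≤ _ := Set.ncard_le_ncard hbox (Finset.finite_toSet _)
      _ = ((Finset.Ioo ax bx) ×ˢ (Finset.Ioo ay by')).card := Set.ncard_coe_finset _
      _ = _ := by rw [Finset.card_product, Int.card_Ioo, Int.card_Ioo]
  set w := (bx - ax).toNat with hw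
  set h := (by' - ay).toNat with hh
  have hcard' : (Enclosed c).ncard ≤ (w - 1) * (h - 1) := by
    have e1 : (bx - ax - 1).toNat = w - 1 := by omega
    have e2 : (by' - ay - 1).toNat = h - 1 := by omega
    rw [e1, e2] at hcard
    exact hcard
  have hnat : ∀ K : ℕ, L ≤ 4 * K + 4 → (Enclosed c).ncard ≤ K ^ 2 := by
    intro K hK
    rcases Nat.eq_zero_or_pos w with hw0 | hw1
    · rw [hw0] at hcard'
      simp only [Nat.zero_sub, Nat.zero_mul, Nat.le_zero] at hcard'
      rw [hcard']
      exact Nat.zero_le _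
    rcases Nat.eq_zero_or_pos h with hh0 | hh1
    · rw [hh0] at hcard'
      simp only [Nat.zero_sub, Nat.mul_zero, Nat.le_zero] at hcard'
      rw [hcard']
      exact Nat.zero_le _
    have hab : (w - 1) + (h - 1) ≤ 2 * K := by omega
    refine le_trans hcard' ?_
    have : ((w - 1 : ℕ) : ℤ) * ((h - 1 : ℕ) : ℤ) ≤ (K : ℤ) ^ 2 := by
      have h1 : ((w - 1 : ℕ) : ℤ) + ((h - 1 : ℕ) : ℤ) ≤ 2 * K := by exact_mod_cast hab
      nlinarith [sq_nonneg (((w - 1 : ℕ) : ℤ) - ((h - 1 : ℕ) : ℤ)),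
        Int.natCast_nonneg (w - 1), Int.natCast_nonneg (h - 1)]
    exact_mod_cast this
  refine ⟨?_, ?_, ?_⟩
  · -- real bound
    rcases Nat.eq_zero_or_pos w with hw0 | hw1
    · rw [hw0] at hcard'
      simp only [Nat.zero_sub, Nat.zero_mul] at hcard'
      have h0 : (Enclosed c).ncard = 0 := by
        simp only [Nat.zero_sub, Nat.zero_mul, Nat.mul_zero, Nat.le_zero] at hcard'
        exact hcard'
      rw [h0]
      simp only [Nat.cast_zero]
      positivity
    rcases Nat.eq_zero_or_pos h with hh0 | hh1
    · rw [hh0] at hcard'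
      simp only [Nat.zero_sub, Nat.mul_zero] at hcard'
      have h0 : (Enclosed c).ncard = 0 := by
        simp only [Nat.zero_sub, Nat.zero_mul, Nat.mul_zero, Nat.le_zero] at hcard'
        exact hcard'
      rw [h0]
      simp only [Nat.cast_zero]
      positivity
    have hc1 : ((Enclosed c).ncard : ℝ) ≤ ((w : ℝ) - 1) * ((h : ℝ) - 1) := by
      have : ((w - 1) * (h - 1) : ℕ) = ((w : ℝ) - 1) * ((h : ℝ) - 1) := by
        push_cast [Nat.cast_sub hw1, Nat.cast_sub hh1]
        ring
      rw [← this]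
      exact_mod_cast hcard'
    have hW : (1 : ℝ) ≤ (w : ℝ) := by exact_mod_cast hw1
    have hH : (1 : ℝ) ≤ (h : ℝ) := by exact_mod_cast hh1
    have hLr : 2 * (w : ℝ) + 2 * (h : ℝ) ≤ (L : ℝ) := by exact_mod_cast hwh
    refine le_trans hc1 ?_
    nlinarith [sq_nonneg ((w : ℝ) - (h : ℝ)),
      mul_nonneg (by linarith : (0 : ℝ) ≤ (L : ℝ) / 4 - ((w : ℝ) + (h : ℝ)) / 2)
        (by linarith : (0 : ℝ) ≤ (L : ℝ) / 4 + ((w : ℝ) + (h : ℝ)) / 2 - 2)]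
  · intro hmod
    exact hnat _ (by omega)
  · intro m hm
    exact hnat _ (by omega)
end

section
/- The total score of any K-tiling is bounded above by the sum over all colors c of (number of placed cells with color c) × (number of crowns on placed cells of color c), with equality if and only if every color with at least one crown forms a single monochromatic connected region. -/
open Finset

lemma key_fiber {Cell ι : Type*} [Fintype Cell] [DecidableEq ι] (f : Cell → ι) (crown : Cell → ℕ) :
    (∑ r ∈ univ.image f,
        (univ.filter fun a => f a = r).card *
          ∑ a ∈ univ.filter (fun a => f a = r), crown a)
      = ∑ a : Cell, (univ.filter fun b => f b = f a).card * crown a := by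
  rw [← Finset.sum_fiberwise_of_maps_to (fun a _ => Finset.mem_image_of_mem f (mem_univ a))
    (fun a => (univ.filter fun b => f b = f a).card * crown a)]
  refine Finset.sum_congr rfl fun r _ => ?_
  rw [Finset.mul_sum]
  refine Finset.sum_congr rfl fun a ha => ?_
  rw [(Finset.mem_filter.mp ha).2]

/-- Abstract score bound for K-tilings. Cells (a finite type) each carry a
color and a crown count; `comp` assigns each cell its monochromatic connected
component (so `comp` refines `color`). The score (sum over components of
size × crowns) is at most the sum over colors of
(number of cells of that color) × (crowns of that color), with equality iff
every color carrying at least one crown has all its cells in a single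
component. -/
theorem stmt_5 {Cell C ι : Type*} [Fintype Cell] [DecidableEq C] [DecidableEq ι]
    (color : Cell → C) (crown : Cell → ℕ) (comp : Cell → ι)
    (hrefine : ∀ a b, comp a = comp b → color a = color b) :
    (∑ r ∈ univ.image comp,
        (univ.filter fun a => comp a = r).card *
          ∑ a ∈ univ.filter (fun a => comp a = r), crown a) ≤
      (∑ c ∈ univ.image color,
        (univ.filter fun a => color a = c).card *
          ∑ a ∈ univ.filter (fun a => color a = c), crown a) ∧
    ((∑ r ∈ univ.image comp,
        (univ.filter fun a => comp a = r).card *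
          ∑ a ∈ univ.filter (fun a => comp a = r), crown a) =
      (∑ c ∈ univ.image color,
        (univ.filter fun a => color a = c).card *
          ∑ a ∈ univ.filter (fun a => color a = c), crown a) ↔
      ∀ c : C, 0 < (∑ a ∈ univ.filter (fun a => color a = c), crown a) →
        ∀ a b : Cell, color a = c → color b = c → comp a = comp b) := by
  rw [key_fiber comp crown, key_fiber color crown]
  have hsub : ∀ a : Cell, (univ.filter fun b => comp b = comp a)
      ⊆ (univ.filter fun b => color b = color a) := by
    intro a b hb
    simp only [mem_filter, mem_univ, true_and] at hb ⊢
    exact hrefine b a hb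
  have hterm : ∀ a ∈ (univ : Finset Cell),
      (univ.filter fun b => comp b = comp a).card * crown a ≤
      (univ.filter fun b => color b = color a).card * crown a := by
    intro a _
    exact Nat.mul_le_mul_right _ (card_le_card (hsub a))
  refine ⟨Finset.sum_le_sum hterm, ?_⟩
  rw [Finset.sum_eq_sum_iff_of_le hterm]
  constructor
  · intro h c hpos a b ha hb
    -- find a cell of color c with positive crown
    obtain ⟨a0, ha0, hc0⟩ := Finset.exists_lt_of_sum_lt (f := fun _ => 0)
      (by simpa using hpos)
    simp only [mem_filter, mem_univ, true_and] at ha0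
    have heq : (univ.filter fun b => comp b = comp a0)
        = (univ.filter fun b => color b = color a0) := by
      apply Finset.eq_of_subset_of_card_le (hsub a0)
      exact Nat.le_of_eq (Nat.eq_of_mul_eq_mul_right hc0 (h a0 (mem_univ a0))).symm
    have key : ∀ x : Cell, color x = c → comp x = comp a0 := by
      intro x hx
      have : x ∈ (univ.filter fun b => color b = color a0) := by
        simp [hx, ha0]
      rw [← heq] at this
      simpa using this
    rw [key a ha, key b hb]
  · intro H a _
    rcases Nat.eq_zero_or_pos (crown a) with h0 | hp
    · simp [h0]
    · have hpos : 0 < ∑ x ∈ univ.filter (fun x => color x = color a), crown x :=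
        lt_of_lt_of_le hp (Finset.single_le_sum (fun x _ => Nat.zero_le _) (by simp))
      have heq : (univ.filter fun b => color b = color a)
          = (univ.filter fun b => comp b = comp a) := by
        apply Finset.eq_of_subset_of_card_le
        · intro b hb
          simp only [mem_filter, mem_univ, true_and] at hb ⊢
          exact H (color a) hpos b a hb rfl
        · exact card_le_card (hsub a)
      rw [heq]
end

section
/- Strategy stealing for the two-player domino-picking game from empty boards: in the two-stage game where players alternately pick dominoes from a finite multiset τ to build sequences τ'_1, τ'_2 and then each maximizes their own score independently, if the game value is determined (every play yields a winner or draw) and positions are symmetric at the start, then the second player cannot have a winning strategy. -/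
/-- `P2Win score n turn A B R` : in the alternating domino-picking game where
`A` is player 1's picked set, `B` is player 2's, `R` is the remaining pool,
`turn = true` means player 1 to move, and `n` moves remain, player 2 can force
a win (i.e. end with a strictly greater optimal score, `score` giving the best
achievable final score from a picked set of dominoes). -/
def P2Win {D : Type*} [DecidableEq D] (score : Finset D → ℕ) :
    ℕ → Bool → Finset D → Finset D → Finset D → Prop
  | 0, _, A, B, _ => score A < score B
  | n + 1, true, A, B, R => ∀ d ∈ R, P2Win score n false (insert d A) B (R.erase d)
  | n + 1, false, A, B, R => ∃ d ∈ R, P2Win score n true A (insert d B) (R.erase d)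

theorem steal_key {D : Type*} [DecidableEq D] (score : Finset D → ℕ)
    (hmono : ∀ A B : Finset D, A ⊆ B → score A ≤ score B) : ∀ n : ℕ,
    (∀ (A A₀ B R : Finset D) (x : D), R.card = n → x ∉ R → x ∈ A → A₀ ⊆ A →
      P2Win score (n+1) true B A₀ (insert x R) → P2Win score n false A B R → False) ∧
    (∀ (A A₀ B R : Finset D) (x : D), R.card = n → x ∉ R → x ∈ A → A₀ ⊆ A →
      P2Win score (n+1) false B A₀ (insert x R) → P2Win score n true A B R → False) := by
  intro n
  induction n with
  | zero =>
    constructor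
    · intro A A₀ B R x _ hxR hxA hsub hph hreal
      have hreal' : score A < score B := hreal
      have h := hph x (Finset.mem_insert_self x R)
      have h' : score (insert x B) < score A₀ := h
      have h1 : score B ≤ score (insert x B) := hmono _ _ (Finset.subset_insert _ _)
      have h2 : score A₀ ≤ score A := hmono _ _ hsub
      omega
    · intro A A₀ B R x hcard hxR hxA hsub hph hreal
      have hR : R = ∅ := Finset.card_eq_zero.mp hcard
      subst hR
      have hreal' : score A < score B := hreal
      obtain ⟨e, he, h⟩ := hph
      have hex : e = x := by simpa using he
      subst hex
      have h' : score B < score (insert e A₀) := h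
      have h2 : score (insert e A₀) ≤ score A :=
        hmono _ _ (Finset.insert_subset hxA hsub)
      omega
  | succ n ih =>
    obtain ⟨ih1, ih2⟩ := ih
    constructor
    · intro A A₀ B R x hcard hxR hxA hsub hph hreal
      obtain ⟨d, hd, hreal'⟩ := hreal
      have hdx : d ≠ x := fun h => hxR (h ▸ hd)
      have hph' := hph d (Finset.mem_insert_of_mem hd)
      rw [Finset.erase_insert_of_ne hdx.symm] at hph'
      exact ih2 A A₀ (insert d B) (R.erase d) x
        (by rw [Finset.card_erase_of_mem hd, hcard]; omega)
        (fun h => hxR (Finset.mem_of_mem_erase h)) hxA hsub hph' hreal'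
    · intro A A₀ B R x hcard hxR hxA hsub hph hreal
      obtain ⟨e, he, hph'⟩ := hph
      rcases Finset.mem_insert.mp he with hex | heR
      · -- phantom strategy picks the spare x
        subst hex
        rw [Finset.erase_insert hxR] at hph'
        have hRne : R.Nonempty := Finset.card_pos.mp (by omega)
        obtain ⟨f, hf⟩ := hRne
        have hph'' : P2Win score (n+1) true B (insert e A₀)
            (insert f (R.erase f)) := by
          rw [Finset.insert_erase hf]; exact hph'
        exact ih1 (insert f A) (insert e A₀) B (R.erase f) f
          (by rw [Finset.card_erase_of_mem hf, hcard]; omega)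
          (Finset.notMem_erase f R) (Finset.mem_insert_self f A)
          (Finset.insert_subset (Finset.mem_insert_of_mem hxA)
            (hsub.trans (Finset.subset_insert _ _)))
          hph'' (hreal f hf)
      · -- phantom strategy picks a real element e
        have hex : e ≠ x := fun h => hxR (h ▸ heR)
        rw [Finset.erase_insert_of_ne hex.symm] at hph'
        exact ih1 (insert e A) (insert e A₀) B (R.erase e) x
          (by rw [Finset.card_erase_of_mem heR, hcard]; omega)
          (fun h => hxR (Finset.mem_of_mem_erase h))
          (Finset.mem_insert_of_mem hxA)
          (Finset.insert_subset_insert e hsub) hph' (hreal e heR)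

/-- Strategy stealing: in the symmetric two-player picking game starting from
empty boards, where both players share the same monotone payoff `score`
(an extra picked domino never decreases one's optimal achievable score) and
the winner is the player with strictly greater score, the second player has
no winning strategy. -/
theorem stmt_19 {D : Type*} [DecidableEq D] (score : Finset D → ℕ)
    (hmono : ∀ A B : Finset D, A ⊆ B → score A ≤ score B)
    (τ : Finset D) (heven : Even τ.card) :
    ¬ P2Win score τ.card true ∅ ∅ τ := by
  intro H
  rcases Nat.eq_zero_or_pos τ.card with h0 | hpos
  · rw [h0] at H
    exact absurd (H : score ∅ < score ∅) (lt_irrefl _)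
  · obtain ⟨x, hx⟩ := Finset.card_pos.mp hpos
    obtain ⟨n, hn⟩ : ∃ n, τ.card = n + 1 := ⟨τ.card - 1, by omega⟩
    rw [hn] at H
    have hreal := H x hx
    have hph : P2Win score (n+1) true ∅ ∅ (insert x (τ.erase x)) := by
      rw [Finset.insert_erase hx]; exact H
    exact (steal_key score hmono n).1 (insert x ∅) ∅ ∅ (τ.erase x) x
      (by rw [Finset.card_erase_of_mem hx, hn]; omega)
      (Finset.notMem_erase x τ) (Finset.mem_insert_self x ∅)
      (Finset.empty_subset _) hph hreal
end
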